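/- Let f : 𝔹ⁿ → 𝔹ⁿ be a Möbius transformation of the unit ball onto itself. Then for all x, y ∈ 𝔹ⁿ, p_{𝔹ⁿ}(x,y)/(1+√(1−p_{𝔹ⁿ}(x,y)²)) ≤ p_{𝔹ⁿ}(f(x),f(y)) ≤ 2·p_{𝔹ⁿ}(x,y)/(1+p_{𝔹ⁿ}(x,y)²). -/

import Mathlib

set_option maxHeartbeats 1000000

open Metric Set Filter

noncomputable def pB {n : ℕ} (x y : EuclideanSpace ℝ (Fin n)) : ℝ :=
  dist x y / Real.sqrt (dist x y ^ 2 + 4 * (1 - ‖x‖) * (1 - ‖y‖))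

/-- f preserves the absolute (cross) ratio of quadruples of points of S
(the characteristic property of Möbius transformations). -/
def PreservesCrossRatioOn {n : ℕ} (f : EuclideanSpace ℝ (Fin n) → EuclideanSpace ℝ (Fin n))
    (S : Set (EuclideanSpace ℝ (Fin n))) : Prop :=
  ∀ a ∈ S, ∀ b ∈ S, ∀ c ∈ S, ∀ d ∈ S,
    dist (f a) (f c) * dist (f b) (f d) * (dist a b * dist c d) =
      dist a c * dist b d * (dist (f a) (f b) * dist (f c) (f d))

section Aux

variable {n : ℕ}
local notation "E" => EuclideanSpace ℝ (Fin n)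

lemma normw (a β : E) (hβ : ‖β‖ = 1) :
    ‖(1 - ‖a‖^2) • (β - a) - (‖β - a‖^2) • a‖ = ‖β - a‖^2 := by
  have h1 : ‖β - a‖^2 = 1 - 2 * inner ℝ β a + ‖a‖^2 := by
    rw [@norm_sub_sq_real]; rw [hβ]; ring
  have h2 : ‖(1 - ‖a‖^2) • (β - a) - (‖β - a‖^2) • a‖^2 = (‖β - a‖^2)^2 := by
    rw [@norm_sub_sq_real]
    simp only [norm_smul, real_inner_smul_left, real_inner_smul_right, Real.norm_eq_abs,
      inner_sub_left, real_inner_self_eq_norm_sq, starRingEnd_apply, star_trivial]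
    rw [mul_pow, mul_pow, sq_abs, sq_abs, h1]
    ring
  exact (pow_left_inj₀ (norm_nonneg _) (sq_nonneg _) (two_ne_zero)).mp h2

lemma normxy (x y : E) : ‖(‖x‖^2) • y - (‖y‖^2) • x‖ = ‖x‖ * ‖y‖ * ‖x - y‖ := by
  have h2 : ‖(‖x‖^2) • y - (‖y‖^2) • x‖^2 = (‖x‖ * ‖y‖ * ‖x - y‖)^2 := by
    rw [@norm_sub_sq_real]
    simp only [norm_smul, real_inner_smul_left, real_inner_smul_right, Real.norm_eq_abs]
    rw [mul_pow, mul_pow, sq_abs, sq_abs]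
    have h3 : ‖x - y‖^2 = ‖x‖^2 - 2 * inner ℝ x y + ‖y‖^2 := by
      rw [@norm_sub_sq_real]
    rw [show inner ℝ y x = inner ℝ x y from real_inner_comm x y, mul_pow, mul_pow, h3]
    ring
  exact (pow_left_inj₀ (norm_nonneg _) (by positivity) (two_ne_zero)).mp h2

lemma chord_ineq (a β β' : E) (ha : ‖a‖ < 1) (hβ : ‖β‖ = 1) (hβ' : ‖β'‖ = 1) :
    (1 - ‖a‖^2) * ‖β - β'‖ ≤ 2 * (‖a - β‖ * ‖a - β'‖) := by
  set x := β - a with hx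
  set y := β' - a with hy
  have hxn : ‖x‖ ≠ 0 := by
    simp only [hx, norm_ne_zero_iff, sub_ne_zero]
    intro h; rw [← h] at ha; rw [hβ] at ha; linarith
  have hyn : ‖y‖ ≠ 0 := by
    simp only [hy, norm_ne_zero_iff, sub_ne_zero]
    intro h; rw [← h] at ha; rw [hβ'] at ha; linarith
  have key : (1 - ‖a‖^2) • ((‖y‖^2) • x - (‖x‖^2) • y) =
      (‖y‖^2) • ((1 - ‖a‖^2) • x - (‖x‖^2) • a) - (‖x‖^2) • ((1 - ‖a‖^2) • y - (‖y‖^2) • a) := by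
    module
  have h1 : ‖(1 - ‖a‖^2) • x - (‖x‖^2) • a‖ = ‖x‖^2 := normw a β hβ
  have h2 : ‖(1 - ‖a‖^2) • y - (‖y‖^2) • a‖ = ‖y‖^2 := normw a β' hβ'
  have h3 : ‖(‖y‖^2) • x - (‖x‖^2) • y‖ = ‖y‖ * ‖x‖ * ‖y - x‖ := normxy y x
  have h4 : (1 - ‖a‖^2) * (‖y‖ * ‖x‖ * ‖y - x‖) ≤ ‖y‖^2 * ‖x‖^2 + ‖x‖^2 * ‖y‖^2 := by
    calc (1 - ‖a‖^2) * (‖y‖ * ‖x‖ * ‖y - x‖) = ‖(1 - ‖a‖^2) • ((‖y‖^2) • x - (‖x‖^2) • y)‖ := by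
          rw [norm_smul, Real.norm_eq_abs, abs_of_nonneg (by nlinarith [ha, norm_nonneg a] : (0:ℝ) ≤ 1 - ‖a‖^2), h3]
      _ ≤ ‖(‖y‖^2) • ((1 - ‖a‖^2) • x - (‖x‖^2) • a)‖ + ‖(‖x‖^2) • ((1 - ‖a‖^2) • y - (‖y‖^2) • a)‖ := by
          rw [key]; exact norm_sub_le _ _
      _ = ‖y‖^2 * ‖x‖^2 + ‖x‖^2 * ‖y‖^2 := by
          rw [norm_smul, norm_smul, Real.norm_eq_abs, Real.norm_eq_abs, abs_of_nonneg (sq_nonneg ‖y‖), abs_of_nonneg (sq_nonneg ‖x‖), h1, h2]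
  have hyx : ‖y - x‖ = ‖β' - β‖ := by rw [hx, hy]; congr 1; abel
  have hab : ‖a - β‖ = ‖x‖ := by rw [hx, ← norm_neg]; congr 1; abel
  have hab' : ‖a - β'‖ = ‖y‖ := by rw [hy, ← norm_neg]; congr 1; abel
  have hbb : ‖β - β'‖ = ‖β' - β‖ := norm_sub_rev _ _
  rw [hbb, hab, hab']
  have hx0 : 0 < ‖x‖ := lt_of_le_of_ne (norm_nonneg _) (Ne.symm hxn)
  have hy0 : 0 < ‖y‖ := lt_of_le_of_ne (norm_nonneg _) (Ne.symm hyn)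
  rw [hyx] at h4
  nlinarith [h4, mul_pos hx0 hy0]

lemma exists_mu (hn : 0 < n) (f : E → E)
    (hf : Set.BijOn f (ball (0:E) 1) (ball (0:E) 1))
    (hmob : PreservesCrossRatioOn f (ball (0:E) 1)) :
    ∃ μ : E → ℝ, (∀ a ∈ ball (0:E) 1, 0 < μ a) ∧
      ∀ a ∈ ball (0:E) 1, ∀ b ∈ ball (0:E) 1, dist (f a) (f b) = μ a * μ b * dist a b := by
  classical
  set B := ball (0:E) 1 with hB
  set v : E := EuclideanSpace.single ⟨0, hn⟩ (1:ℝ) with hv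
  have hvn : ‖v‖ = 1 := by simp [hv, EuclideanSpace.norm_single]
  set e₀ : E := 0 with he₀
  set e₁ : E := (2⁻¹ : ℝ) • v with he₁
  set e₂ : E := (4⁻¹ : ℝ) • v with he₂
  have hn1 : ‖e₁‖ = 2⁻¹ := by rw [he₁, norm_smul, hvn]; norm_num
  have hn2 : ‖e₂‖ = 4⁻¹ := by rw [he₂, norm_smul, hvn]; norm_num
  have hm0 : e₀ ∈ B := by simp [hB, he₀]
  have hm1 : e₁ ∈ B := by rw [hB, mem_ball_zero_iff, hn1]; norm_num
  have hm2 : e₂ ∈ B := by rw [hB, mem_ball_zero_iff, hn2]; norm_num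
  have hd01 : e₀ ≠ e₁ := by intro h; rw [← h] at hn1; simp [he₀] at hn1
  have hd02 : e₀ ≠ e₂ := by intro h; rw [← h] at hn2; simp [he₀] at hn2
  have hd12 : e₁ ≠ e₂ := by
    intro h
    have := congrArg norm h
    rw [hn1, hn2] at this; norm_num at this
  set lam : E → E → ℝ := fun p q => dist (f p) (f q) / dist p q with hlam
  have hlpos : ∀ p ∈ B, ∀ q ∈ B, p ≠ q → 0 < lam p q := by
    intro p hp q hq hpq
    have h1 : f p ≠ f q := fun h => hpq (hf.injOn hp hq h)
    exact div_pos (dist_pos.mpr h1) (dist_pos.mpr hpq)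
  have hlsymm : ∀ p q, lam p q = lam q p := by
    intro p q; simp [hlam, dist_comm]
  have hlmul : ∀ a ∈ B, ∀ b ∈ B, ∀ c ∈ B, ∀ d ∈ B, a ≠ b → c ≠ d → a ≠ c → b ≠ d →
      lam a c * lam b d = lam a b * lam c d := by
    intro a ha b hb c hc d hd hab hcd hac hbd
    have h := hmob a ha b hb c hc d hd
    have d1 : dist a b ≠ 0 := dist_ne_zero.mpr hab
    have d2 : dist c d ≠ 0 := dist_ne_zero.mpr hcd
    have d3 : dist a c ≠ 0 := dist_ne_zero.mpr hac
    have d4 : dist b d ≠ 0 := dist_ne_zero.mpr hbd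
    simp only [hlam]
    field_simp
    linarith [h]
  have lamnn : ∀ p q, 0 ≤ lam p q := fun p q => div_nonneg dist_nonneg dist_nonneg
  set μ : E → ℝ := fun a =>
    if a = e₀ then Real.sqrt (lam e₀ e₁ * lam e₀ e₂ / lam e₁ e₂)
    else if a = e₁ then Real.sqrt (lam e₁ e₀ * lam e₁ e₂ / lam e₀ e₂)
    else Real.sqrt (lam a e₀ * lam a e₁ / lam e₀ e₁) with hμ
  have hμpos : ∀ a ∈ B, 0 < μ a := by
    intro a ha
    simp only [hμ]
    split_ifs with h0 h1
    · exact Real.sqrt_pos.mpr (div_pos (mul_pos (hlpos e₀ hm0 e₁ hm1 hd01)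
        (hlpos e₀ hm0 e₂ hm2 hd02)) (hlpos e₁ hm1 e₂ hm2 hd12))
    · exact Real.sqrt_pos.mpr (div_pos (mul_pos (hlpos e₁ hm1 e₀ hm0 (Ne.symm hd01))
        (hlpos e₁ hm1 e₂ hm2 hd12)) (hlpos e₀ hm0 e₂ hm2 hd02))
    · exact Real.sqrt_pos.mpr (div_pos (mul_pos (hlpos a ha e₀ hm0 h0)
        (hlpos a ha e₁ hm1 h1)) (hlpos e₀ hm0 e₁ hm1 hd01))
  refine ⟨μ, hμpos, ?_⟩
  have μe0 : μ e₀ = Real.sqrt (lam e₀ e₁ * lam e₀ e₂ / lam e₁ e₂) := by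
    simp [hμ]
  have μe1 : μ e₁ = Real.sqrt (lam e₁ e₀ * lam e₁ e₂ / lam e₀ e₂) := by
    simp only [hμ]; rw [if_neg (Ne.symm hd01)]; simp
  have μgen : ∀ a, a ≠ e₀ → a ≠ e₁ → μ a = Real.sqrt (lam a e₀ * lam a e₁ / lam e₀ e₁) := by
    intro a h0 h1; simp only [hμ]; rw [if_neg h0, if_neg h1]
  have l01 := hlpos e₀ hm0 e₁ hm1 hd01
  have l02 := hlpos e₀ hm0 e₂ hm2 hd02
  have l12 := hlpos e₁ hm1 e₂ hm2 hd12
  have ne01 : lam e₀ e₁ ≠ 0 := ne_of_gt l01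
  have ne02 : lam e₀ e₂ ≠ 0 := ne_of_gt l02
  have ne12 : lam e₁ e₂ ≠ 0 := ne_of_gt l12
  have sqrtmul : ∀ x y : ℝ, 0 ≤ x → 0 ≤ y → Real.sqrt x * Real.sqrt y = Real.sqrt (x * y) :=
    fun x y hx _ => (Real.sqrt_mul hx y).symm
  have nn : ∀ p q r s t u : E, 0 ≤ lam p q * lam r s / lam t u :=
    fun p q r s t u => div_nonneg (mul_nonneg (lamnn _ _) (lamnn _ _)) (lamnn _ _)
  have conclude : ∀ (a b : E) (x y : ℝ), 0 ≤ x → 0 ≤ y → 0 < lam a b → x * y = (lam a b)^2 →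
      Real.sqrt x * Real.sqrt y = lam a b := by
    intro a b x y hx hy hl hxy
    rw [sqrtmul x y hx hy, hxy, Real.sqrt_sq hl.le]
  have key : ∀ a ∈ B, ∀ b ∈ B, a ≠ b → μ a * μ b = lam a b := by
    intro a ha b hb hab
    have hlab := hlpos a ha b hb hab
    by_cases ha0 : a = e₀
    · by_cases hb1 : b = e₁
      · subst ha0; subst hb1
        rw [μe0, μe1]
        apply conclude _ _ _ _ (nn _ _ _ _ _ _) (nn _ _ _ _ _ _) hlab
        rw [hlsymm e₁ e₀]
        field_simp
      · by_cases hb0 : b = e₀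
        · exact absurd (ha0.trans hb0.symm) hab
        · subst ha0
          rw [μe0, μgen b hb0 hb1]
          apply conclude _ _ _ _ (nn _ _ _ _ _ _) (nn _ _ _ _ _ _) hlab
          have H : lam b e₁ * lam e₀ e₂ = lam b e₀ * lam e₁ e₂ :=
            hlmul b hb e₀ hm0 e₁ hm1 e₂ hm2 hb0 hd12 hb1 hd02
          rw [hlsymm e₀ b]
          rw [div_mul_div_comm, div_eq_iff (mul_ne_zero ne12 ne01)]
          linear_combination (lam e₀ e₁ * lam b e₀) * H
    · by_cases ha1 : a = e₁
      · by_cases hb0 : b = e₀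
        · subst ha1; subst hb0
          rw [μe1, μe0]
          apply conclude _ _ _ _ (nn _ _ _ _ _ _) (nn _ _ _ _ _ _) hlab
          rw [hlsymm e₁ e₀]
          field_simp
        · by_cases hb1 : b = e₁
          · exact absurd (ha1.trans hb1.symm) hab
          · subst ha1
            rw [μe1, μgen b hb0 hb1]
            apply conclude _ _ _ _ (nn _ _ _ _ _ _) (nn _ _ _ _ _ _) hlab
            have H : lam b e₀ * lam e₁ e₂ = lam b e₁ * lam e₀ e₂ :=
              hlmul b hb e₁ hm1 e₀ hm0 e₂ hm2 hb1 hd02 hb0 hd12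
            rw [hlsymm e₁ e₀, hlsymm e₁ b]
            rw [div_mul_div_comm, div_eq_iff (mul_ne_zero ne02 ne01)]
            linear_combination (lam b e₁) * lam e₀ e₁ * H
      · by_cases hb0 : b = e₀
        · subst hb0
          rw [μgen a ha0 ha1, μe0]
          apply conclude _ _ _ _ (nn _ _ _ _ _ _) (nn _ _ _ _ _ _) hlab
          have H : lam a e₁ * lam e₀ e₂ = lam a e₀ * lam e₁ e₂ :=
            hlmul a ha e₀ hm0 e₁ hm1 e₂ hm2 ha0 hd12 ha1 hd02
          rw [hlsymm a e₀]
          rw [div_mul_div_comm, div_eq_iff (mul_ne_zero ne01 ne12)]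
          linear_combination (lam e₀ a) * lam e₀ e₁ * H + lam e₀ e₁ * lam e₁ e₂ * (lam e₀ a) * (hlsymm a e₀)
        · by_cases hb1 : b = e₁
          · subst hb1
            rw [μgen a ha0 ha1, μe1]
            apply conclude _ _ _ _ (nn _ _ _ _ _ _) (nn _ _ _ _ _ _) hlab
            have H : lam a e₀ * lam e₁ e₂ = lam a e₁ * lam e₀ e₂ :=
              hlmul a ha e₁ hm1 e₀ hm0 e₂ hm2 ha1 hd02 ha0 hd12
            rw [hlsymm e₁ e₀, hlsymm a e₁]
            rw [div_mul_div_comm, div_eq_iff (mul_ne_zero ne01 ne02)]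
            linear_combination (lam e₁ a) * lam e₀ e₁ * H + lam e₀ e₁ * lam e₀ e₂ * (lam e₁ a) * (hlsymm a e₁)
          · rw [μgen a ha0 ha1, μgen b hb0 hb1]
            apply conclude _ _ _ _ (nn _ _ _ _ _ _) (nn _ _ _ _ _ _) hlab
            have H1 : lam a e₀ * lam b e₁ = lam a b * lam e₀ e₁ :=
              hlmul a ha b hb e₀ hm0 e₁ hm1 hab hd01 ha0 hb1
            have H2 : lam a e₁ * lam b e₀ = lam a b * lam e₁ e₀ :=
              hlmul a ha b hb e₁ hm1 e₀ hm0 hab (Ne.symm hd01) ha1 hb0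
            rw [hlsymm e₁ e₀] at H2
            field_simp
            linear_combination (lam a e₁ * lam b e₀) * H1 + (lam a b * lam e₀ e₁) * H2
  intro a ha b hb
  by_cases hab : a = b
  · subst hab; simp
  · have hk := key a ha b hb hab
    have hd : dist a b ≠ 0 := dist_ne_zero.mpr hab
    rw [hk]
    simp only [hlam]
    field_simp

lemma main_le (hn : 0 < n) (f : E → E) (μ : E → ℝ)
    (hf : Set.BijOn f (ball (0:E) 1) (ball (0:E) 1))
    (hμpos : ∀ a ∈ ball (0:E) 1, 0 < μ a)
    (hmul : ∀ a ∈ ball (0:E) 1, ∀ b ∈ ball (0:E) 1, dist (f a) (f b) = μ a * μ b * dist a b)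
    (hesc : ∀ (b : ℕ → E) (β : E), (∀ k, b k ∈ ball (0:E) 1) → Tendsto b atTop (nhds β) →
      Tendsto (fun k => ‖f (b k)‖) atTop (nhds (1:ℝ)) → β ∉ ball (0:E) 1)
    (a : E) (ha : a ∈ ball (0:E) 1) :
    μ a ^ 2 * (1 - ‖a‖^2) ≤ 1 - ‖f a‖^2 := by
  have hfa : f a ∈ ball (0:E) 1 := hf.mapsTo ha
  have hfa1 : ‖f a‖ < 1 := mem_ball_zero_iff.mp hfa
  have ha1 : ‖a‖ < 1 := mem_ball_zero_iff.mp ha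
  obtain ⟨η, hη, hfaη⟩ : ∃ η : E, ‖η‖ = 1 ∧ f a = ‖f a‖ • η := by
    by_cases h : f a = 0
    · exact ⟨EuclideanSpace.single ⟨0, hn⟩ (1:ℝ), by simp [EuclideanSpace.norm_single], by
        simp [h]⟩
    · refine ⟨‖f a‖⁻¹ • f a, ?_, ?_⟩
      · rw [norm_smul, Real.norm_eq_abs, abs_of_nonneg (inv_nonneg.mpr (norm_nonneg _)),
          inv_mul_cancel₀ (norm_ne_zero_iff.mpr h)]
      · rw [smul_smul, mul_inv_cancel₀ (norm_ne_zero_iff.mpr h), one_smul]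
  set s := ‖f a‖ with hs
  have hs0 : 0 ≤ s := norm_nonneg _
  set t : ℕ → ℝ := fun k => 1 - (1 - s) * ((k:ℝ)+2)⁻¹ with htdef
  have htgt : ∀ k, s < t k := by
    intro k
    have h1 : t k - s = (1-s)*(((k:ℝ)+1)/((k:ℝ)+2)) := by
      rw [htdef]
      have : ((k:ℝ)+2) ≠ 0 := by positivity
      field_simp
      ring
    have h2 : 0 < t k - s := by
      rw [h1]
      have h3 := sub_pos.mpr hfa1
      positivity
    linarith
  have ht0 : ∀ k, 0 ≤ t k := fun k => le_of_lt (lt_of_le_of_lt hs0 (htgt k))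
  have htlt : ∀ k, t k < 1 := by
    intro k
    rw [htdef]
    have h1 : 0 < (1-s) * ((k:ℝ)+2)⁻¹ := by
      have := sub_pos.mpr hfa1
      positivity
    simp only
    linarith
  have htlim : Tendsto t atTop (nhds 1) := by
    have h2 : Tendsto (fun k : ℕ => (k:ℝ)+2) atTop atTop :=
      tendsto_atTop_add_const_right atTop 2 tendsto_natCast_atTop_atTop
    have hinv : Tendsto (fun k : ℕ => ((k:ℝ)+2)⁻¹) atTop (nhds 0) := h2.inv_tendsto_atTop
    have hfin : Tendsto (fun k : ℕ => 1 - (1-s) * ((k:ℝ)+2)⁻¹) atTop (nhds (1 - (1-s)*0)) :=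
      Tendsto.sub tendsto_const_nhds (Tendsto.mul tendsto_const_nhds hinv)
    rw [mul_zero, sub_zero] at hfin
    exact hfin
  set u : ℕ → E := fun k => t k • η with hudef
  set u' : ℕ → E := fun k => (-(t k)) • η with hu'def
  have humem : ∀ k, u k ∈ ball (0:E) 1 := by
    intro k
    rw [mem_ball_zero_iff, hudef]
    simp only [norm_smul, hη, mul_one, Real.norm_eq_abs]
    rw [abs_of_nonneg (ht0 k)]; exact htlt k
  have hu'mem : ∀ k, u' k ∈ ball (0:E) 1 := by
    intro k
    rw [mem_ball_zero_iff, hu'def]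
    simp only [norm_smul, hη, mul_one, Real.norm_eq_abs]
    rw [abs_neg, abs_of_nonneg (ht0 k)]; exact htlt k
  set b : ℕ → E := fun k => Function.invFunOn f (ball (0:E) 1) (u k) with hbdef
  set b' : ℕ → E := fun k => Function.invFunOn f (ball (0:E) 1) (u' k) with hb'def
  have hbmem : ∀ k, b k ∈ ball (0:E) 1 := fun k => hf.surjOn.mapsTo_invFunOn (humem k)
  have hb'mem : ∀ k, b' k ∈ ball (0:E) 1 := fun k => hf.surjOn.mapsTo_invFunOn (hu'mem k)
  have hfb : ∀ k, f (b k) = u k := fun k => hf.surjOn.rightInvOn_invFunOn (humem k)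
  have hfb' : ∀ k, f (b' k) = u' k := fun k => hf.surjOn.rightInvOn_invFunOn (hu'mem k)
  have d1 : ∀ k, dist (f a) (u k) = t k - s := by
    intro k
    rw [dist_eq_norm, hfaη, hudef]
    simp only
    rw [← sub_smul, norm_smul, hη, mul_one, Real.norm_eq_abs,
      abs_of_nonpos (by linarith [htgt k] : s - t k ≤ 0)]
    ring
  have d2 : ∀ k, dist (f a) (u' k) = t k + s := by
    intro k
    rw [dist_eq_norm, hfaη, hu'def]
    simp only
    rw [← sub_smul, norm_smul, hη, mul_one, Real.norm_eq_abs,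
      abs_of_nonneg (by linarith [ht0 k, hs0] : (0:ℝ) ≤ s - -(t k))]
    ring
  have d3 : ∀ k, dist (u k) (u' k) = 2 * t k := by
    intro k
    rw [dist_eq_norm, hudef, hu'def]
    simp only
    rw [← sub_smul, norm_smul, hη, mul_one, Real.norm_eq_abs,
      abs_of_nonneg (by linarith [ht0 k] : (0:ℝ) ≤ t k - -(t k))]
    ring
  have hknum : ∀ k, (t k - s) * (t k + s) * dist (b k) (b' k) =
      2 * t k * (μ a^2 * (dist a (b k) * dist a (b' k))) := by
    intro k
    have e1 := hmul a ha (b k) (hbmem k)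
    have e2 := hmul a ha (b' k) (hb'mem k)
    have e3 := hmul (b k) (hbmem k) (b' k) (hb'mem k)
    rw [hfb k] at e1 e3
    rw [hfb' k] at e2 e3
    rw [← d1 k, ← d2 k, ← d3 k, e1, e2, e3]
    ring
  have hcb : IsCompact (closedBall (0:E) 1) := isCompact_closedBall _ _
  obtain ⟨β, hβcb, φ, hφm, hφlim⟩ :=
    hcb.tendsto_subseq (fun k => ball_subset_closedBall (hbmem k))
  obtain ⟨β', hβ'cb, ψ, hψm, hψlim⟩ :=
    hcb.tendsto_subseq (fun k => ball_subset_closedBall (hb'mem (φ k)))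
  set σ : ℕ → ℕ := fun k => φ (ψ k) with hσdef
  have hσm : StrictMono σ := hφm.comp hψm
  have hbσ : Tendsto (fun k => b (σ k)) atTop (nhds β) := hφlim.comp hψm.tendsto_atTop
  have hb'σ : Tendsto (fun k => b' (σ k)) atTop (nhds β') := hψlim
  have htσ : Tendsto (fun k => t (σ k)) atTop (nhds 1) := htlim.comp hσm.tendsto_atTop
  have hβ1 : ‖β‖ = 1 := by
    have hnb : Tendsto (fun k => ‖f (b (σ k))‖) atTop (nhds (1:ℝ)) := by
      have heq : (fun k => ‖f (b (σ k))‖) = fun k => t (σ k) := by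
        funext k
        rw [hfb (σ k), hudef]
        simp only [norm_smul, hη, mul_one, Real.norm_eq_abs]
        exact abs_of_nonneg (ht0 (σ k))
      rw [heq]; exact htσ
    have := hesc (fun k => b (σ k)) β (fun k => hbmem (σ k)) hbσ hnb
    have hle : ‖β‖ ≤ 1 := mem_closedBall_zero_iff.mp hβcb
    rcases lt_or_eq_of_le hle with h | h
    · exact absurd (mem_ball_zero_iff.mpr h) this
    · exact h
  have hβ'1 : ‖β'‖ = 1 := by
    have hnb : Tendsto (fun k => ‖f (b' (σ k))‖) atTop (nhds (1:ℝ)) := by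
      have heq : (fun k => ‖f (b' (σ k))‖) = fun k => t (σ k) := by
        funext k
        rw [hfb' (σ k), hu'def]
        simp only [norm_smul, hη, mul_one, Real.norm_eq_abs]
        rw [abs_neg]
        exact abs_of_nonneg (ht0 (σ k))
      rw [heq]; exact htσ
    have := hesc (fun k => b' (σ k)) β' (fun k => hb'mem (σ k)) hb'σ hnb
    have hle : ‖β'‖ ≤ 1 := mem_closedBall_zero_iff.mp hβ'cb
    rcases lt_or_eq_of_le hle with h | h
    · exact absurd (mem_ball_zero_iff.mpr h) this
    · exact h
  have hL : Tendsto (fun k => (t (σ k) - s) * (t (σ k) + s) * dist (b (σ k)) (b' (σ k)))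
      atTop (nhds ((1 - s) * (1 + s) * dist β β')) :=
    ((htσ.sub tendsto_const_nhds).mul (htσ.add tendsto_const_nhds)).mul (hbσ.dist hb'σ)
  have hR : Tendsto (fun k => (t (σ k) - s) * (t (σ k) + s) * dist (b (σ k)) (b' (σ k)))
      atTop (nhds (2 * 1 * (μ a^2 * (dist a β * dist a β')))) := by
    have hR0 : Tendsto (fun k => 2 * t (σ k) * (μ a^2 * (dist a (b (σ k)) * dist a (b' (σ k)))))
        atTop (nhds (2 * 1 * (μ a^2 * (dist a β * dist a β')))) :=
      ((tendsto_const_nhds.mul htσ)).mul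
        (tendsto_const_nhds.mul ((tendsto_const_nhds.dist hbσ).mul (tendsto_const_nhds.dist hb'σ)))
    have heq : (fun k => 2 * t (σ k) * (μ a^2 * (dist a (b (σ k)) * dist a (b' (σ k))))) =
        (fun k => (t (σ k) - s) * (t (σ k) + s) * dist (b (σ k)) (b' (σ k))) :=
      funext fun k => (hknum (σ k)).symm
    rw [heq] at hR0
    exact hR0
  have heqlim : (1 - s) * (1 + s) * dist β β' = 2 * 1 * (μ a^2 * (dist a β * dist a β')) :=
    tendsto_nhds_unique hL hR
  have hμa := hμpos a ha
  have haβ : a ≠ β := fun h => by rw [h, hβ1] at ha1; exact lt_irrefl _ ha1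
  by_cases hββ' : β = β'
  · exfalso
    rw [hββ'] at heqlim
    rw [dist_self] at heqlim
    have h1 : 0 < dist a β' := dist_pos.mpr (by rw [← hββ']; exact haβ)
    have h2 : 0 < μ a^2 * (dist a β' * dist a β') := by positivity
    linarith [heqlim, h2]
  · have hchord := chord_ineq a β β' ha1 hβ1 hβ'1
    have hd : 0 < dist β β' := dist_pos.mpr hββ'
    rw [dist_eq_norm] at hd heqlim
    have e1 : dist a β = ‖a - β‖ := dist_eq_norm a β
    have e2 : dist a β' = ‖a - β'‖ := dist_eq_norm a β'
    rw [e1, e2] at heqlim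
    have h5 : μ a^2 * (1-‖a‖^2) * ‖β-β'‖ ≤ (1-s^2) * ‖β-β'‖ := by
      nlinarith [mul_le_mul_of_nonneg_left hchord (sq_nonneg (μ a)), heqlim]
    exact le_of_mul_le_mul_right h5 hd

lemma hesc_of_cont (f : E → E) (hf : Set.BijOn f (ball (0:E) 1) (ball (0:E) 1))
    (hfc : ContinuousOn f (ball (0:E) 1)) :
    ∀ (b : ℕ → E) (β : E), (∀ k, b k ∈ ball (0:E) 1) → Tendsto b atTop (nhds β) →
      Tendsto (fun k => ‖f (b k)‖) atTop (nhds (1:ℝ)) → β ∉ ball (0:E) 1 := by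
  intro b β hmem hlim hnorm hβ
  have hc : ContinuousAt f β := hfc.continuousAt (isOpen_ball.mem_nhds hβ)
  have h1 : Tendsto (fun k => f (b k)) atTop (nhds (f β)) := hc.tendsto.comp hlim
  have h2 : Tendsto (fun k => ‖f (b k)‖) atTop (nhds ‖f β‖) := h1.norm
  have h3 := tendsto_nhds_unique hnorm h2
  have h4 : ‖f β‖ < 1 := mem_ball_zero_iff.mp (hf.mapsTo hβ)
  rw [← h3] at h4
  exact lt_irrefl _ h4

lemma hesc_inv (hn : 0 < n) (f : E → E) (μ : E → ℝ)
    (hf : Set.BijOn f (ball (0:E) 1) (ball (0:E) 1))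
    (hμpos : ∀ a ∈ ball (0:E) 1, 0 < μ a)
    (hmul : ∀ a ∈ ball (0:E) 1, ∀ b ∈ ball (0:E) 1, dist (f a) (f b) = μ a * μ b * dist a b) :
    ∀ (b : ℕ → E) (β : E), (∀ k, b k ∈ ball (0:E) 1) → Tendsto b atTop (nhds β) →
      Tendsto (fun k => ‖Function.invFunOn f (ball (0:E) 1) (b k)‖) atTop (nhds (1:ℝ)) →
      β ∉ ball (0:E) 1 := by
  intro b β hmem hlim hnorm hβ
  set g := Function.invFunOn f (ball (0:E) 1) with hgdef
  set w : ℕ → E := fun k => g (b k) with hwdef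
  have hwmem : ∀ k, w k ∈ ball (0:E) 1 := fun k => hf.surjOn.mapsTo_invFunOn (hmem k)
  have hfw : ∀ k, f (w k) = b k := fun k => hf.surjOn.rightInvOn_invFunOn (hmem k)
  set bs : E := g β with hbsdef
  have hbsmem : bs ∈ ball (0:E) 1 := hf.surjOn.mapsTo_invFunOn hβ
  have hfbs : f bs = β := hf.surjOn.rightInvOn_invFunOn hβ
  have hμbs := hμpos bs hbsmem
  have hbs1 : ‖bs‖ < 1 := mem_ball_zero_iff.mp hbsmem
  -- dist (b k) β → 0
  have hd1 : Tendsto (fun k => dist (b k) β) atTop (nhds 0) := by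
    have := hlim.dist (tendsto_const_nhds (x := β))
    rwa [dist_self] at this
  -- eventually dist (w k) bs is bounded below
  set δ : ℝ := (1 - ‖bs‖)/2 with hδdef
  have hδpos : 0 < δ := by rw [hδdef]; linarith
  have hev : ∀ᶠ k in atTop, δ ≤ dist (w k) bs := by
    have h5 : (1 + ‖bs‖)/2 < 1 := by linarith
    have h6 : ∀ᶠ k in atTop, (1 + ‖bs‖)/2 ≤ ‖w k‖ := hnorm.eventually_const_le h5
    filter_upwards [h6] with k hk
    have h7 : ‖w k‖ - ‖bs‖ ≤ ‖w k - bs‖ := norm_sub_norm_le _ _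
    rw [dist_eq_norm]
    rw [hδdef]
    linarith
  -- μ (w k) → 0
  have hμw : Tendsto (fun k => μ (w k)) atTop (nhds 0) := by
    apply squeeze_zero' (Eventually.of_forall (fun k => (hμpos (w k) (hwmem k)).le))
      (g := fun k => dist (b k) β / (μ bs * δ))
    · filter_upwards [hev] with k hk
      have h8 : dist (b k) β = μ (w k) * μ bs * dist (w k) bs := by
        rw [← hfw k, ← hfbs]
        exact hmul (w k) (hwmem k) bs hbsmem
      rw [le_div_iff₀ (by positivity)]
      calc μ (w k) * (μ bs * δ) ≤ μ (w k) * (μ bs * dist (w k) bs) := by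
            apply mul_le_mul_of_nonneg_left _ (hμpos (w k) (hwmem k)).le
            exact mul_le_mul_of_nonneg_left hk hμbs.le
        _ = dist (b k) β := by rw [h8]; ring
    · simpa using hd1.div_const (μ bs * δ)
  -- pick v in ball with v ≠ β
  obtain ⟨v, hvmem, hvβ⟩ : ∃ v ∈ ball (0:E) 1, v ≠ β := by
    by_cases h : β = 0
    · refine ⟨(2⁻¹ : ℝ) • EuclideanSpace.single ⟨0, hn⟩ (1:ℝ), ?_, ?_⟩
      · rw [mem_ball_zero_iff, norm_smul, EuclideanSpace.norm_single]
        norm_num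
      · rw [h]
        intro hc
        have := congrArg norm hc
        rw [norm_smul, EuclideanSpace.norm_single, norm_zero] at this
        norm_num at this
    · exact ⟨0, by simp, fun hc => h (hc.symm ▸ rfl)⟩
  set c : E := g v with hcdef
  have hcmem : c ∈ ball (0:E) 1 := hf.surjOn.mapsTo_invFunOn hvmem
  have hfc' : f c = v := hf.surjOn.rightInvOn_invFunOn hvmem
  have hμc := hμpos c hcmem
  have hc1 : ‖c‖ < 1 := mem_ball_zero_iff.mp hcmem
  have hlim2 : Tendsto (fun k => dist (b k) v) atTop (nhds 0) := by
    apply squeeze_zero' (Eventually.of_forall (fun k => dist_nonneg))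
      (g := fun k => μ (w k) * (μ c * 2))
    · apply Eventually.of_forall
      intro k
      have h8 : dist (b k) v = μ (w k) * μ c * dist (w k) c := by
        rw [← hfw k, ← hfc']
        exact hmul (w k) (hwmem k) c hcmem
      have h9 : dist (w k) c ≤ 2 := by
        have := dist_le_norm_add_norm (w k) c
        have h10 : ‖w k‖ < 1 := mem_ball_zero_iff.mp (hwmem k)
        linarith
      rw [h8]
      have : μ (w k) * μ c * dist (w k) c ≤ μ (w k) * μ c * 2 :=
        mul_le_mul_of_nonneg_left h9 (mul_nonneg (hμpos (w k) (hwmem k)).le hμc.le)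
      linarith [this]
    · simpa using hμw.mul_const (μ c * 2)
  have hlim3 : Tendsto (fun k => dist (b k) v) atTop (nhds (dist β v)) :=
    hlim.dist tendsto_const_nhds
  have := tendsto_nhds_unique hlim3 hlim2
  exact hvβ (dist_eq_zero.mp this).symm


lemma invariant (hn : 0 < n) (f : E → E)
    (hf : Set.BijOn f (ball (0:E) 1) (ball (0:E) 1))
    (hfc : ContinuousOn f (ball (0:E) 1))
    (hmob : PreservesCrossRatioOn f (ball (0:E) 1)) :
    ∃ μ : E → ℝ, (∀ a ∈ ball (0:E) 1, 0 < μ a) ∧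
      (∀ a ∈ ball (0:E) 1, ∀ b ∈ ball (0:E) 1, dist (f a) (f b) = μ a * μ b * dist a b) ∧
      (∀ a ∈ ball (0:E) 1, μ a ^ 2 * (1 - ‖a‖^2) = 1 - ‖f a‖^2) := by
  obtain ⟨μ, hμpos, hμmul⟩ := exists_mu hn f hf hmob
  refine ⟨μ, hμpos, hμmul, ?_⟩
  set g := Function.invFunOn f (ball (0:E) 1) with hgdef
  have hgmaps : MapsTo g (ball (0:E) 1) (ball (0:E) 1) := hf.surjOn.mapsTo_invFunOn
  have hgleft : ∀ a ∈ ball (0:E) 1, g (f a) = a := fun a ha => hf.injOn.leftInvOn_invFunOn ha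
  have hgright : ∀ u ∈ ball (0:E) 1, f (g u) = u := fun u hu => hf.surjOn.rightInvOn_invFunOn hu
  have hg : Set.BijOn g (ball (0:E) 1) (ball (0:E) 1) := by
    refine ⟨hgmaps, ?_, ?_⟩
    · intro u hu v hv h
      rw [← hgright u hu, ← hgright v hv, h]
    · intro a ha
      exact ⟨f a, hf.mapsTo ha, hgleft a ha⟩
  set ν : E → ℝ := fun u => (μ (g u))⁻¹ with hνdef
  have hνpos : ∀ u ∈ ball (0:E) 1, 0 < ν u := fun u hu => inv_pos.mpr (hμpos _ (hgmaps hu))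
  have hνmul : ∀ u ∈ ball (0:E) 1, ∀ v ∈ ball (0:E) 1,
      dist (g u) (g v) = ν u * ν v * dist u v := by
    intro u hu v hv
    have h := hμmul (g u) (hgmaps hu) (g v) (hgmaps hv)
    rw [hgright u hu, hgright v hv] at h
    have h1 := hμpos _ (hgmaps hu)
    have h2 := hμpos _ (hgmaps hv)
    simp only [hνdef]
    rw [h]
    field_simp
  intro a ha
  have le1 := main_le hn f μ hf hμpos hμmul (hesc_of_cont f hf hfc) a ha
  have le2 := main_le hn g ν hg hνpos hνmul (hesc_inv hn f μ hf hμpos hμmul) (f a) (hf.mapsTo ha)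
  simp only [hνdef] at le2
  rw [hgleft a ha] at le2
  have hμa := hμpos a ha
  have key : 1 - ‖f a‖^2 ≤ μ a^2 * (1 - ‖a‖^2) := by
    have h3 := mul_le_mul_of_nonneg_left le2 (sq_nonneg (μ a))
    have h4 : μ a^2 * ((μ a)⁻¹^2 * (1 - ‖f a‖^2)) = 1 - ‖f a‖^2 := by
      field_simp
    rw [h4] at h3
    linarith [h3]
  linarith [le1, key]


end Aux
lemma mono1 (a b : ℝ) (h0 : 0 ≤ a) (hab : a ≤ b) (hb : b ≤ 1) :
    a / (1 + Real.sqrt (1 - a^2)) ≤ b / (1 + Real.sqrt (1 - b^2)) := by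
  have hsa : Real.sqrt (1 - b^2) ≤ Real.sqrt (1 - a^2) := Real.sqrt_le_sqrt (by nlinarith)
  have h1 : 0 < 1 + Real.sqrt (1 - a^2) := by positivity
  have h2 : 0 < 1 + Real.sqrt (1 - b^2) := by positivity
  rw [div_le_div_iff₀ h1 h2]
  nlinarith [mul_le_mul hab hsa (Real.sqrt_nonneg _) (le_trans h0 hab)]

lemma mono2 (a b : ℝ) (h0 : 0 ≤ a) (hab : a ≤ b) (hb : b ≤ 1) :
    2*a/(1+a^2) ≤ 2*b/(1+b^2) := by
  have h1 : 0 < 1 + a^2 := by positivity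
  have h2 : 0 < 1 + b^2 := by positivity
  rw [div_le_div_iff₀ h1 h2]
  have hab1 : a*b ≤ 1 := by nlinarith
  nlinarith [mul_nonneg (sub_nonneg.mpr hab) (sub_nonneg.mpr hab1)]

lemma pb_bounds (d XY A : ℝ) (hd : 0 ≤ d) (hXY : 0 < XY) (h1 : XY ≤ A) (h2 : A ≤ 4*XY) :
    d / (Real.sqrt XY + Real.sqrt (d^2+XY)) ≤ d / Real.sqrt (d^2+A) ∧
    d / Real.sqrt (d^2+A) ≤ d / Real.sqrt (d^2+XY) := by
  have hS1 : 0 < Real.sqrt XY := Real.sqrt_pos.mpr hXY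
  have hS2 : 0 < Real.sqrt (d^2+XY) := Real.sqrt_pos.mpr (by nlinarith)
  have hSA : 0 < Real.sqrt (d^2+A) := Real.sqrt_pos.mpr (by nlinarith)
  have hS1sq : (Real.sqrt XY)^2 = XY := Real.sq_sqrt hXY.le
  have hS2sq : (Real.sqrt (d^2+XY))^2 = d^2+XY := Real.sq_sqrt (by nlinarith)
  have hS12 : Real.sqrt XY ≤ Real.sqrt (d^2+XY) := Real.sqrt_le_sqrt (by nlinarith)
  constructor
  · have hle : Real.sqrt (d^2+A) ≤ Real.sqrt XY + Real.sqrt (d^2+XY) := by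
      have hsq : d^2 + A ≤ (Real.sqrt XY + Real.sqrt (d^2+XY))^2 := by
        nlinarith [mul_le_mul_of_nonneg_left hS12 hS1.le]
      calc Real.sqrt (d^2+A) ≤ Real.sqrt ((Real.sqrt XY + Real.sqrt (d^2+XY))^2) :=
            Real.sqrt_le_sqrt hsq
        _ = Real.sqrt XY + Real.sqrt (d^2+XY) := Real.sqrt_sq (by positivity)
    rw [div_le_div_iff₀ (by positivity) hSA]
    nlinarith [mul_le_mul_of_nonneg_left hle hd]
  · have hle : Real.sqrt (d^2+XY) ≤ Real.sqrt (d^2+A) := Real.sqrt_le_sqrt (by nlinarith)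
    rw [div_le_div_iff₀ hSA hS2]
    nlinarith [mul_le_mul_of_nonneg_left hle hd]

-- the combination lemma: given the invariance relation, derive both inequalities
lemma final_algebra (d d' XY XY' A A' : ℝ)
    (hd : 0 ≤ d) (hd' : 0 ≤ d')
    (hXY : 0 < XY) (hXY' : 0 < XY')
    (h1 : XY ≤ A) (h2 : A ≤ 4*XY) (h1' : XY' ≤ A') (h2' : A' ≤ 4*XY')
    (hinv : d'^2 * XY = d^2 * XY') :
    d / Real.sqrt (d^2+A) / (1 + Real.sqrt (1 - (d / Real.sqrt (d^2+A))^2)) ≤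
      d' / Real.sqrt (d'^2+A') ∧
    d' / Real.sqrt (d'^2+A') ≤
      2 * (d / Real.sqrt (d^2+A)) / (1 + (d / Real.sqrt (d^2+A))^2) := by
  set p := d / Real.sqrt (d^2+A) with hp
  set p' := d' / Real.sqrt (d'^2+A') with hp'
  set S1 := Real.sqrt XY with hS1d
  set S2 := Real.sqrt (d^2+XY) with hS2d
  set S1' := Real.sqrt XY' with hS1'd
  set S2' := Real.sqrt (d'^2+XY') with hS2'd
  have hS1 : 0 < S1 := Real.sqrt_pos.mpr hXY
  have hS2 : 0 < S2 := Real.sqrt_pos.mpr (by nlinarith)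
  have hS1' : 0 < S1' := Real.sqrt_pos.mpr hXY'
  have hS2' : 0 < S2' := Real.sqrt_pos.mpr (by nlinarith)
  have hS1sq : S1^2 = XY := Real.sq_sqrt hXY.le
  have hS2sq : S2^2 = d^2+XY := Real.sq_sqrt (by nlinarith)
  have hS1'sq : S1'^2 = XY' := Real.sq_sqrt hXY'.le
  have hS2'sq : S2'^2 = d'^2+XY' := Real.sq_sqrt (by nlinarith)
  obtain ⟨hUp, hpT⟩ := pb_bounds d XY A hd hXY h1 h2
  obtain ⟨hUp', hpT'⟩ := pb_bounds d' XY' A' hd' hXY' h1' h2'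
  -- T' = T and U' = U
  have hS1eq : d'*S1 = d*S1' := by
    have hsq : (d'*S1)^2 = (d*S1')^2 := by
      rw [mul_pow, mul_pow, hS1sq, hS1'sq]; linear_combination hinv
    exact (pow_left_inj₀ (by positivity) (by positivity) (two_ne_zero)).mp hsq
  have hS2eq : d'*S2 = d*S2' := by
    have hsq : (d'*S2)^2 = (d*S2')^2 := by
      rw [mul_pow, mul_pow, hS2sq, hS2'sq]; linear_combination hinv
    exact (pow_left_inj₀ (by positivity) (by positivity) (two_ne_zero)).mp hsq
  have hTT : d'/S2' = d/S2 := by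
    rw [div_eq_div_iff hS2'.ne' hS2.ne']
    exact hS2eq
  have hUU : d'/(S1'+S2') = d/(S1+S2) := by
    rw [div_eq_div_iff (by positivity : (0:ℝ) < S1'+S2').ne' (by positivity : (0:ℝ) < S1+S2).ne']
    linear_combination hS1eq + hS2eq
  set T := d/S2 with hTd
  set U := d/(S1+S2) with hUd
  -- basic bounds
  have hT1 : T ≤ 1 := by
    rw [hTd, div_le_one hS2]
    have : d = Real.sqrt (d^2) := (Real.sqrt_sq hd).symm
    rw [this, hS2d]
    exact Real.sqrt_le_sqrt (by nlinarith)
  have hp0 : 0 ≤ p := by positivity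
  have hp'0 : 0 ≤ p' := by positivity
  have hU0 : 0 ≤ U := by positivity
  have hpT2 : p ≤ T := hpT
  have hUp2 : U ≤ p := hUp
  have hp1 : p ≤ 1 := le_trans hpT2 hT1
  -- identities
  have hrad : Real.sqrt (1 - T^2) = S1/S2 := by
    have h3 : 1 - T^2 = (S1/S2)^2 := by
      rw [hTd, div_pow, div_pow, hS1sq, hS2sq]
      have hne : d^2+XY ≠ 0 := (by nlinarith [sq_nonneg d] : (0:ℝ) < d^2+XY).ne'
      rw [eq_div_iff hne, sub_mul, div_mul_cancel₀ _ hne]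
      ring
    rw [h3, Real.sqrt_sq (by positivity)]
  have hid1 : T/(1 + Real.sqrt (1 - T^2)) = U := by
    rw [hrad, hTd, hUd, div_div]
    have hden : S2 * (1 + S1/S2) = S1 + S2 := by
      field_simp
      ring
    rw [hden]
  have hid2 : 2*U/(1+U^2) = T := by
    rw [hUd, hTd]
    have hq1 : S2^2 = d^2 + S1^2 := by rw [hS1sq]; exact hS2sq
    rw [div_eq_div_iff (by positivity) hS2.ne']
    field_simp
    ring_nf
    linear_combination d * hq1
  constructor
  · -- lower bound
    have c1 : p / (1 + Real.sqrt (1 - p^2)) ≤ T/(1 + Real.sqrt (1 - T^2)) :=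
      mono1 p T hp0 hpT2 hT1
    rw [hid1] at c1
    calc p / (1 + Real.sqrt (1 - p^2)) ≤ U := c1
      _ = d'/(S1'+S2') := hUU.symm
      _ ≤ p' := hUp'
  · -- upper bound
    have c2 : 2*U/(1+U^2) ≤ 2*p/(1+p^2) := mono2 U p hU0 hUp2 hp1
    rw [hid2] at c2
    calc p' ≤ d'/S2' := hpT'
      _ = T := hTT
      _ ≤ 2*p/(1+p^2) := c2


theorem stmt19 {n : ℕ} (f : EuclideanSpace ℝ (Fin n) → EuclideanSpace ℝ (Fin n))
    (hf : Set.BijOn f (Metric.ball (0 : EuclideanSpace ℝ (Fin n)) 1)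
      (Metric.ball (0 : EuclideanSpace ℝ (Fin n)) 1))
    (hfc : ContinuousOn f (Metric.ball (0 : EuclideanSpace ℝ (Fin n)) 1))
    (hmob : PreservesCrossRatioOn f (Metric.ball (0 : EuclideanSpace ℝ (Fin n)) 1))
    (x y : EuclideanSpace ℝ (Fin n))
    (hx : x ∈ Metric.ball (0 : EuclideanSpace ℝ (Fin n)) 1)
    (hy : y ∈ Metric.ball (0 : EuclideanSpace ℝ (Fin n)) 1) :
    pB x y / (1 + Real.sqrt (1 - pB x y ^ 2)) ≤ pB (f x) (f y) ∧
    pB (f x) (f y) ≤ 2 * pB x y / (1 + pB x y ^ 2) := by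
  rcases Nat.eq_zero_or_pos n with hn0 | hn
  · subst hn0
    have hxy : x = y := Subsingleton.elim x y
    subst hxy
    have h0 : pB x x = 0 := by simp [pB]
    have h1 : pB (f x) (f x) = 0 := by simp [pB]
    rw [h0, h1]
    norm_num
  · obtain ⟨μ, hμpos, hμmul, hμeq⟩ := invariant hn f hf hfc hmob
    have hx1 : ‖x‖ < 1 := mem_ball_zero_iff.mp hx
    have hy1 : ‖y‖ < 1 := mem_ball_zero_iff.mp hy
    have hfx1 : ‖f x‖ < 1 := mem_ball_zero_iff.mp (hf.mapsTo hx)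
    have hfy1 : ‖f y‖ < 1 := mem_ball_zero_iff.mp (hf.mapsTo hy)
    have hnx := norm_nonneg x
    have hny := norm_nonneg y
    have hnfx := norm_nonneg (f x)
    have hnfy := norm_nonneg (f y)
    have hd' : dist (f x) (f y) = μ x * μ y * dist x y := hμmul x hx y hy
    have hinv : dist (f x) (f y) ^ 2 * ((1-‖x‖^2)*(1-‖y‖^2)) =
        dist x y ^ 2 * ((1-‖f x‖^2)*(1-‖f y‖^2)) := by
      rw [hd', ← hμeq x hx, ← hμeq y hy]
      ring
    have hXY : 0 < (1-‖x‖^2)*(1-‖y‖^2) :=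
      mul_pos (by nlinarith) (by nlinarith)
    have hXY' : 0 < (1-‖f x‖^2)*(1-‖f y‖^2) :=
      mul_pos (by nlinarith) (by nlinarith)
    have c1 : (1-‖x‖^2)*(1-‖y‖^2) ≤ 4*(1-‖x‖)*(1-‖y‖) := by
      nlinarith [mul_nonneg (mul_nonneg (sub_nonneg.mpr hx1.le) (sub_nonneg.mpr hy1.le))
        (show (0:ℝ) ≤ 4 - (1+‖x‖)*(1+‖y‖) by nlinarith)]
    have c2 : 4*(1-‖x‖)*(1-‖y‖) ≤ 4*((1-‖x‖^2)*(1-‖y‖^2)) := by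
      nlinarith [mul_nonneg (mul_nonneg (sub_nonneg.mpr hx1.le) (sub_nonneg.mpr hy1.le))
        (show (0:ℝ) ≤ (1+‖x‖)*(1+‖y‖) - 1 by nlinarith)]
    have c1' : (1-‖f x‖^2)*(1-‖f y‖^2) ≤ 4*(1-‖f x‖)*(1-‖f y‖) := by
      nlinarith [mul_nonneg (mul_nonneg (sub_nonneg.mpr hfx1.le) (sub_nonneg.mpr hfy1.le))
        (show (0:ℝ) ≤ 4 - (1+‖f x‖)*(1+‖f y‖) by nlinarith)]
    have c2' : 4*(1-‖f x‖)*(1-‖f y‖) ≤ 4*((1-‖f x‖^2)*(1-‖f y‖^2)) := by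
      nlinarith [mul_nonneg (mul_nonneg (sub_nonneg.mpr hfx1.le) (sub_nonneg.mpr hfy1.le))
        (show (0:ℝ) ≤ (1+‖f x‖)*(1+‖f y‖) - 1 by nlinarith)]
    have h := final_algebra (dist x y) (dist (f x) (f y))
      ((1-‖x‖^2)*(1-‖y‖^2)) ((1-‖f x‖^2)*(1-‖f y‖^2))
      (4*(1-‖x‖)*(1-‖y‖)) (4*(1-‖f x‖)*(1-‖f y‖))
      dist_nonneg dist_nonneg hXY hXY' c1 c2 c1' c2' hinv
    have e1 : pB x y = dist x y / Real.sqrt (dist x y ^ 2 + 4*(1-‖x‖)*(1-‖y‖)) := rfl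
    have e2 : pB (f x) (f y) =
        dist (f x) (f y) / Real.sqrt (dist (f x) (f y) ^ 2 + 4*(1-‖f x‖)*(1-‖f y‖)) := rfl
    rw [e1, e2]
    exact h
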